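/- Let Ω be a compact convex subset of ℝ^d, λ ≥ 0, and let μ⁰, μ¹ be finite positive Borel measures on Ω. Let γ* be optimal for OPT_λ(μ⁰,μ¹) with marginals γ₀*, γ₁*, and set ν⁰ = μ⁰ − γ₀* and ν¹ = μ¹ − γ₁*. Then the supports of the destroyed and created mass are at distance at least √(2λ): for every x in the support of ν⁰ and every y in the support of ν¹, ‖x − y‖ ≥ √(2λ). -/

import Mathlib

open MeasureTheory

/-- The set of partial transport plans between `μ0` and `μ1`: positive measures on the
product space whose marginals are dominated by `μ0` and `μ1` respectively. -/
def IsPartialCoupling {d : ℕ} (μ0 μ1 : Measure (EuclideanSpace ℝ (Fin d)))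
    (γ : Measure (EuclideanSpace ℝ (Fin d) × EuclideanSpace ℝ (Fin d))) : Prop :=
  γ.map Prod.fst ≤ μ0 ∧ γ.map Prod.snd ≤ μ1

/-- The partial transport cost
`C_λ(γ) = ∫ ‖x−y‖² dγ + λ(|μ0 − γ₀| + |μ1 − γ₁|)`. -/
noncomputable def partialCost {d : ℕ} (lam : ℝ)
    (μ0 μ1 : Measure (EuclideanSpace ℝ (Fin d)))
    (γ : Measure (EuclideanSpace ℝ (Fin d) × EuclideanSpace ℝ (Fin d))) : ℝ :=
  (∫ p, ‖p.1 - p.2‖ ^ 2 ∂γ) +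
    lam * (((μ0 - γ.map Prod.fst) Set.univ).toReal +
           ((μ1 - γ.map Prod.snd) Set.univ).toReal)

/-- The support of a Borel measure: the set of points all of whose open
neighborhoods have nonzero measure. -/
def msupport {d : ℕ} (ν : Measure (EuclideanSpace ℝ (Fin d))) :
    Set (EuclideanSpace ℝ (Fin d)) :=
  {x | ∀ U : Set (EuclideanSpace ℝ (Fin d)), IsOpen U → x ∈ U → ν U ≠ 0}

/-- If `γ*` is optimal for `OPT_λ(μ⁰,μ¹)` with marginals `γ₀*, γ₁*`,
and `ν⁰ = μ⁰ − γ₀*`, `ν¹ = μ¹ − γ₁*`, then the supports of `ν⁰` and `ν¹` are at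
distance at least `√(2λ)`. -/
theorem supports_of_destroyed_and_created_mass_far_apart
    {d : ℕ} (Ω : Set (EuclideanSpace ℝ (Fin d)))
    (hΩc : IsCompact Ω) (hΩconv : Convex ℝ Ω)
    (lam : ℝ) (hlam : 0 ≤ lam)
    (μ0 μ1 : Measure (EuclideanSpace ℝ (Fin d)))
    [IsFiniteMeasure μ0] [IsFiniteMeasure μ1]
    (hμ0 : μ0 Ωᶜ = 0) (hμ1 : μ1 Ωᶜ = 0)
    (γstar : Measure (EuclideanSpace ℝ (Fin d) × EuclideanSpace ℝ (Fin d)))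
    (hmem : IsPartialCoupling μ0 μ1 γstar)
    (hopt : ∀ γ, IsPartialCoupling μ0 μ1 γ →
      partialCost lam μ0 μ1 γstar ≤ partialCost lam μ0 μ1 γ) :
    ∀ x ∈ msupport (μ0 - γstar.map Prod.fst),
      ∀ y ∈ msupport (μ1 - γstar.map Prod.snd),
        Real.sqrt (2 * lam) ≤ ‖x - y‖ := by
  obtain ⟨h0, h1⟩ := hmem
  intro x hx y hy
  by_contra hcon
  push_neg at hcon
  -- the cost function
  set f : EuclideanSpace ℝ (Fin d) × EuclideanSpace ℝ (Fin d) → ℝ :=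
    fun p => ‖p.1 - p.2‖ ^ 2 with hfdef
  have hfm : Measurable f := by fun_prop
  have hfnn : ∀ p, 0 ≤ f p := fun p => sq_nonneg _
  have hΩm : MeasurableSet Ω := hΩc.isClosed.measurableSet
  haveI : IsFiniteMeasure (γstar.map Prod.fst) := isFiniteMeasure_of_le μ0 h0
  haveI : IsFiniteMeasure (γstar.map Prod.snd) := isFiniteMeasure_of_le μ1 h1
  haveI hγfin : IsFiniteMeasure γstar := by
    constructor
    have h : γstar Set.univ = γstar.map Prod.fst Set.univ := by
      rw [Measure.map_apply measurable_fst MeasurableSet.univ, Set.preimage_univ]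
    rw [h]; exact measure_lt_top _ _
  -- the radius
  set ε := (Real.sqrt (2 * lam) - ‖x - y‖) / 4 with hεdef
  have hεpos : 0 < ε := by
    have := norm_nonneg (x - y); rw [hεdef]; linarith
  set C := (‖x - y‖ + 2 * ε) ^ 2 with hCdef
  have hCnn : 0 ≤ C := sq_nonneg _
  have hClt : C < 2 * lam := by
    have hlt : ‖x - y‖ + 2 * ε < Real.sqrt (2 * lam) := by
      rw [hεdef]; have := norm_nonneg (x - y); linarith
    have hsq : Real.sqrt (2 * lam) ^ 2 = 2 * lam := Real.sq_sqrt (by linarith)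
    calc C < Real.sqrt (2 * lam) ^ 2 := by
            apply pow_lt_pow_left₀ hlt (by have := norm_nonneg (x - y); linarith) (by norm_num)
      _ = 2 * lam := hsq
  -- the balls and the leftover measures
  set Bx := Metric.ball x ε with hBx
  set By := Metric.ball y ε with hBy
  have hBxm : MeasurableSet Bx := Metric.isOpen_ball.measurableSet
  have hBym : MeasurableSet By := Metric.isOpen_ball.measurableSet
  set ν0 := μ0 - γstar.map Prod.fst with hν0
  set ν1 := μ1 - γstar.map Prod.snd with hν1
  haveI : IsFiniteMeasure ν0 := isFiniteMeasure_of_le μ0 Measure.sub_le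
  haveI : IsFiniteMeasure ν1 := isFiniteMeasure_of_le μ1 Measure.sub_le
  set a := ν0 Bx with ha
  set b := ν1 By with hb
  have ha0 : a ≠ 0 := hx Bx Metric.isOpen_ball (Metric.mem_ball_self hεpos)
  have hb0 : b ≠ 0 := hy By Metric.isOpen_ball (Metric.mem_ball_self hεpos)
  have hat : a ≠ ⊤ := (measure_lt_top ν0 Bx).ne
  have hbt : b ≠ ⊤ := (measure_lt_top ν1 By).ne
  set m := min a b with hm
  have hm0 : m ≠ 0 := by
    have h := lt_min (pos_iff_ne_zero.mpr ha0) (pos_iff_ne_zero.mpr hb0)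
    exact h.ne'
  have hmt : m ≠ ⊤ := by
    have : m ≤ a := min_le_left _ _
    exact fun h => hat (top_le_iff.mp (h ▸ this))
  have hma : m ≤ a := min_le_left _ _
  have hmb : m ≤ b := min_le_right _ _
  -- the correction plan σ
  set c := m * a⁻¹ * b⁻¹ with hc
  set σ := c • ((ν0.restrict Bx).prod (ν1.restrict By)) with hσ
  have hσfst : σ.map Prod.fst = (m * a⁻¹) • ν0.restrict Bx := by
    rw [hσ, Measure.map_smul, Measure.map_fst_prod, Measure.restrict_apply_univ, smul_smul]
    congr 1
    rw [hc, mul_assoc, ENNReal.inv_mul_cancel hb0 hbt, mul_one]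
  have hσsnd : σ.map Prod.snd = (m * b⁻¹) • ν1.restrict By := by
    rw [hσ, Measure.map_smul, Measure.map_snd_prod, Measure.restrict_apply_univ, smul_smul]
    congr 1
    rw [hc]
    calc m * a⁻¹ * b⁻¹ * a = m * b⁻¹ * (a⁻¹ * a) := by ring
      _ = m * b⁻¹ := by rw [ENNReal.inv_mul_cancel ha0 hat, mul_one]
  have hle_one : ∀ {u v : ENNReal}, u ≤ v → v ≠ ⊤ → u * v⁻¹ ≤ 1 := by
    intro u v huv hvt
    calc u * v⁻¹ ≤ v * v⁻¹ := mul_le_mul_of_nonneg_right huv zero_le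
      _ ≤ 1 := ENNReal.mul_inv_le_one v
  have hσ0le : σ.map Prod.fst ≤ ν0 := by
    rw [hσfst]
    refine Measure.le_iff'.mpr fun s => ?_
    rw [Measure.smul_apply, smul_eq_mul]
    calc m * a⁻¹ * ν0.restrict Bx s ≤ 1 * ν0.restrict Bx s :=
          mul_le_mul_of_nonneg_right (hle_one hma hat) zero_le
      _ = ν0.restrict Bx s := one_mul _
      _ ≤ ν0 s := Measure.le_iff'.mp Measure.restrict_le_self s
  have hσ1le : σ.map Prod.snd ≤ ν1 := by
    rw [hσsnd]
    refine Measure.le_iff'.mpr fun s => ?_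
    rw [Measure.smul_apply, smul_eq_mul]
    calc m * b⁻¹ * ν1.restrict By s ≤ 1 * ν1.restrict By s :=
          mul_le_mul_of_nonneg_right (hle_one hmb hbt) zero_le
      _ = ν1.restrict By s := one_mul _
      _ ≤ ν1 s := Measure.le_iff'.mp Measure.restrict_le_self s
  -- masses
  have hσfst_univ : σ.map Prod.fst Set.univ = m := by
    rw [hσfst, Measure.smul_apply, Measure.restrict_apply_univ, smul_eq_mul, mul_assoc,
      ENNReal.inv_mul_cancel ha0 hat, mul_one]
  have hσsnd_univ : σ.map Prod.snd Set.univ = m := by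
    rw [hσsnd, Measure.smul_apply, Measure.restrict_apply_univ, smul_eq_mul, mul_assoc,
      ENNReal.inv_mul_cancel hb0 hbt, mul_one]
  have hσuniv : σ Set.univ = m := by
    have h : σ Set.univ = σ.map Prod.fst Set.univ := by
      rw [Measure.map_apply measurable_fst MeasurableSet.univ, Set.preimage_univ]
    rw [h, hσfst_univ]
  haveI hσfin : IsFiniteMeasure σ := by
    constructor; rw [hσuniv]; exact lt_top_iff_ne_top.mpr hmt
  -- σ vanishes outside Bx ×ˢ By
  have hσcompl : σ ((Bx ×ˢ By)ᶜ) = 0 := by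
    rw [hσ, Measure.smul_apply, Measure.prod_restrict,
      Measure.restrict_apply (hBxm.prod hBym).compl, Set.compl_inter_self, measure_empty,
      smul_eq_mul, mul_zero]
  -- γstar vanishes outside Ω ×ˢ Ω
  have hγ0Ω : γstar.map Prod.fst Ωᶜ = 0 := by
    refine le_antisymm ?_ (zero_le)
    rw [← hμ0]; exact Measure.le_iff'.mp h0 _
  have hγ1Ω : γstar.map Prod.snd Ωᶜ = 0 := by
    refine le_antisymm ?_ (zero_le)
    rw [← hμ1]; exact Measure.le_iff'.mp h1 _
  have hγcompl : γstar ((Ω ×ˢ Ω)ᶜ) = 0 := by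
    refine le_antisymm ?_ (zero_le)
    have hsub : (Ω ×ˢ Ω)ᶜ ⊆ (Prod.fst ⁻¹' Ωᶜ) ∪ (Prod.snd ⁻¹' Ωᶜ) := by
      intro p hp
      simp only [Set.mem_compl_iff, Set.mem_prod, not_and_or] at hp
      rcases hp with h | h
      · exact Or.inl h
      · exact Or.inr h
    calc γstar ((Ω ×ˢ Ω)ᶜ) ≤ γstar ((Prod.fst ⁻¹' Ωᶜ) ∪ (Prod.snd ⁻¹' Ωᶜ)) := measure_mono hsub
      _ ≤ γstar (Prod.fst ⁻¹' Ωᶜ) + γstar (Prod.snd ⁻¹' Ωᶜ) := measure_union_le _ _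
      _ = γstar.map Prod.fst Ωᶜ + γstar.map Prod.snd Ωᶜ := by
          rw [Measure.map_apply measurable_fst hΩm.compl,
            Measure.map_apply measurable_snd hΩm.compl]
      _ = 0 := by rw [hγ0Ω, hγ1Ω, add_zero]
  -- integrability of f w.r.t. γstar
  obtain ⟨R, hR⟩ := hΩc.isBounded.subset_closedBall 0
  have hint_γ : Integrable f γstar := by
    refine Integrable.mono' (integrable_const ((2 * max R 0) ^ 2)) hfm.aestronglyMeasurable ?_
    filter_upwards [measure_eq_zero_iff_ae_notMem.mp hγcompl] with p hp
    have hpmem : p ∈ Ω ×ˢ Ω := not_not.mp hp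
    have h1 : ‖p.1‖ ≤ max R 0 := by
      have := hR hpmem.1; rw [Metric.mem_closedBall, dist_zero_right] at this
      exact this.trans (le_max_left _ _)
    have h2 : ‖p.2‖ ≤ max R 0 := by
      have := hR hpmem.2; rw [Metric.mem_closedBall, dist_zero_right] at this
      exact this.trans (le_max_left _ _)
    have hn : ‖p.1 - p.2‖ ≤ 2 * max R 0 := by
      calc ‖p.1 - p.2‖ ≤ ‖p.1‖ + ‖p.2‖ := norm_sub_le _ _
        _ ≤ 2 * max R 0 := by linarith
    rw [Real.norm_eq_abs, abs_of_nonneg (hfnn p)]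
    calc f p = ‖p.1 - p.2‖ ^ 2 := rfl
      _ ≤ (2 * max R 0) ^ 2 := by
          apply pow_le_pow_left₀ (norm_nonneg _) hn
  -- bound for f on Bx ×ˢ By, and integrability w.r.t. σ
  have hfbound : ∀ p ∈ Bx ×ˢ By, f p ≤ C := by
    rintro ⟨p, q⟩ ⟨hp, hq⟩
    have hp' : ‖p - x‖ < ε := by
      rw [hBx, Metric.mem_ball, dist_eq_norm] at hp; exact hp
    have hq' : ‖y - q‖ < ε := by
      rw [hBy, Metric.mem_ball, dist_eq_norm] at hq; rw [norm_sub_rev]; exact hq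
    have hn : ‖p - q‖ ≤ ‖x - y‖ + 2 * ε := by
      have heq : p - q = (p - x) + (x - y) + (y - q) := by abel
      calc ‖p - q‖ = ‖(p - x) + (x - y) + (y - q)‖ := by rw [heq]
        _ ≤ ‖(p - x) + (x - y)‖ + ‖y - q‖ := norm_add_le _ _
        _ ≤ ‖p - x‖ + ‖x - y‖ + ‖y - q‖ := by
            have := norm_add_le (p - x) (x - y); linarith
        _ ≤ ‖x - y‖ + 2 * ε := by linarith
    calc f (p, q) = ‖p - q‖ ^ 2 := rfl
      _ ≤ (‖x - y‖ + 2 * ε) ^ 2 := pow_le_pow_left₀ (norm_nonneg _) hn 2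
  have hfboundae : ∀ᵐ p ∂σ, f p ≤ C := by
    filter_upwards [measure_eq_zero_iff_ae_notMem.mp hσcompl] with p hp
    exact hfbound p (not_not.mp hp)
  have hint_σ : Integrable f σ := by
    refine Integrable.mono' (integrable_const C) hfm.aestronglyMeasurable ?_
    filter_upwards [hfboundae] with p hp
    rw [Real.norm_eq_abs, abs_of_nonneg (hfnn p)]; exact hp
  have hIσ : ∫ p, f p ∂σ ≤ m.toReal * C := by
    calc ∫ p, f p ∂σ ≤ ∫ _, C ∂σ := integral_mono_ae hint_σ (integrable_const C) hfboundae
      _ = (σ Set.univ).toReal • C := integral_const C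
      _ = m.toReal * C := by rw [hσuniv, smul_eq_mul]
  -- the competitor plan γ'
  set γ' := γstar + σ with hγ'
  have hγ'fst : γ'.map Prod.fst = γstar.map Prod.fst + σ.map Prod.fst :=
    Measure.map_add _ _ measurable_fst
  have hγ'snd : γ'.map Prod.snd = γstar.map Prod.snd + σ.map Prod.snd :=
    Measure.map_add _ _ measurable_snd
  have hadd0 : ν0 + γstar.map Prod.fst = μ0 := Measure.sub_add_cancel_of_le h0
  have hadd1 : ν1 + γstar.map Prod.snd = μ1 := Measure.sub_add_cancel_of_le h1
  have hγ'0le : γ'.map Prod.fst ≤ μ0 := by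
    rw [hγ'fst, ← hadd0, add_comm ν0]
    exact add_le_add le_rfl hσ0le
  have hγ'1le : γ'.map Prod.snd ≤ μ1 := by
    rw [hγ'snd, ← hadd1, add_comm ν1]
    exact add_le_add le_rfl hσ1le
  have hγ'coupling : IsPartialCoupling μ0 μ1 γ' := ⟨hγ'0le, hγ'1le⟩
  -- mass bookkeeping
  haveI : IsFiniteMeasure (γ'.map Prod.fst) := isFiniteMeasure_of_le μ0 hγ'0le
  haveI : IsFiniteMeasure (γ'.map Prod.snd) := isFiniteMeasure_of_le μ1 hγ'1le
  set M0 := μ0 Set.univ with hM0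
  set M1 := μ1 Set.univ with hM1
  set G0 := γstar.map Prod.fst Set.univ with hG0
  set G1 := γstar.map Prod.snd Set.univ with hG1
  have hM0t : M0 ≠ ⊤ := (measure_lt_top μ0 _).ne
  have hM1t : M1 ≠ ⊤ := (measure_lt_top μ1 _).ne
  have hG0t : G0 ≠ ⊤ := (measure_lt_top _ _).ne
  have hG1t : G1 ≠ ⊤ := (measure_lt_top _ _).ne
  have hG0le : G0 ≤ M0 := Measure.le_iff'.mp h0 _
  have hG1le : G1 ≤ M1 := Measure.le_iff'.mp h1 _
  have hγ'0univ : γ'.map Prod.fst Set.univ = G0 + m := by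
    rw [hγ'fst, Measure.add_apply, hσfst_univ]
  have hγ'1univ : γ'.map Prod.snd Set.univ = G1 + m := by
    rw [hγ'snd, Measure.add_apply, hσsnd_univ]
  have hG0m : G0 + m ≤ M0 := by rw [← hγ'0univ]; exact Measure.le_iff'.mp hγ'0le _
  have hG1m : G1 + m ≤ M1 := by rw [← hγ'1univ]; exact Measure.le_iff'.mp hγ'1le _
  -- boundary terms
  have hB0 : ((μ0 - γstar.map Prod.fst) Set.univ).toReal = M0.toReal - G0.toReal := by
    rw [Measure.sub_apply MeasurableSet.univ h0, ENNReal.toReal_sub_of_le hG0le hM0t]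
  have hB1 : ((μ1 - γstar.map Prod.snd) Set.univ).toReal = M1.toReal - G1.toReal := by
    rw [Measure.sub_apply MeasurableSet.univ h1, ENNReal.toReal_sub_of_le hG1le hM1t]
  have hB0' : ((μ0 - γ'.map Prod.fst) Set.univ).toReal
      = M0.toReal - (G0.toReal + m.toReal) := by
    rw [Measure.sub_apply MeasurableSet.univ hγ'0le, hγ'0univ,
      ENNReal.toReal_sub_of_le hG0m hM0t, ENNReal.toReal_add hG0t hmt]
  have hB1' : ((μ1 - γ'.map Prod.snd) Set.univ).toReal
      = M1.toReal - (G1.toReal + m.toReal) := by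
    rw [Measure.sub_apply MeasurableSet.univ hγ'1le, hγ'1univ,
      ENNReal.toReal_sub_of_le hG1m hM1t, ENNReal.toReal_add hG1t hmt]
  -- final comparison
  have hcost := hopt γ' hγ'coupling
  rw [partialCost, partialCost] at hcost
  have hintsplit : (∫ p, ‖p.1 - p.2‖ ^ 2 ∂γ') = (∫ p, f p ∂γstar) + ∫ p, f p ∂σ := by
    rw [hγ']; exact integral_add_measure hint_γ hint_σ
  rw [hintsplit, hB0, hB1, hB0', hB1'] at hcost
  have hmpos : 0 < m.toReal := ENNReal.toReal_pos hm0 hmt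
  have hkey : m.toReal * C < m.toReal * (2 * lam) :=
    mul_lt_mul_of_pos_left hClt hmpos
  have hIf : (∫ p, ‖p.1 - p.2‖ ^ 2 ∂γstar) = ∫ p, f p ∂γstar := rfl
  rw [hIf] at hcost
  nlinarith [hIσ, hkey, hcost]
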